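/- Let m ≥ 1 and let f be a nonzero multivariate polynomial in m complex variables. Then the set of points z on the unit sphere S of ℂ^m at which f vanishes has measure zero with respect to the surface measure on S. -/

import Mathlib

open MeasureTheory Metric MvPolynomial
open scoped Pointwise

noncomputable instance (m : ℕ) : MeasurableSpace (EuclideanSpace ℂ (Fin m)) := borel _

instance (m : ℕ) : BorelSpace (EuclideanSpace ℂ (Fin m)) := ⟨rfl⟩

/-- The surface measure on the unit sphere of `ℂ^m` (identified with a Euclidean space of
real dimension `2m`), obtained from the Lebesgue (Haar) measure on `ℂ^m`. -/
noncomputable def sphereSurfaceMeasure (m : ℕ) :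
    Measure (sphere (0 : EuclideanSpace ℂ (Fin m)) 1) :=
  (volume : Measure (EuclideanSpace ℂ (Fin m))).toSphere

lemma mv_continuous_eval {σ : Type*} [Fintype σ] (p : MvPolynomial σ ℂ) :
    Continuous fun x : σ → ℂ => eval x p := by
  induction p using MvPolynomial.induction_on with
  | C a => simpa using continuous_const
  | add p q hp hq => simp only [map_add]; exact hp.add hq
  | mul_X p i hp => simp only [map_mul, eval_X]; exact hp.mul (continuous_apply i)

lemma vol_null_fin (n : ℕ) : ∀ Q : MvPolynomial (Fin n) ℂ, Q ≠ 0 →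
    volume {x : Fin n → ℝ | eval (fun i => (x i : ℂ)) Q = 0} = 0 := by
  induction n with
  | zero =>
    intro Q hQ
    obtain ⟨c, rfl⟩ := MvPolynomial.C_surjective (Fin 0) Q
    have hc : c ≠ 0 := fun h => hQ (by simp [h])
    rw [show {x : Fin 0 → ℝ | eval (fun i => (x i : ℂ)) (C c) = 0} = ∅ by
      ext x; simp [hc]]
    simp
  | succ n ih =>
    intro Q hQ
    set g := finSuccEquiv ℂ n Q with hgdef
    have hg : g ≠ 0 := by
      intro h
      exact hQ (by simpa [hgdef] using (EmbeddingLike.map_eq_zero_iff).mp h)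
    have hgc : g.leadingCoeff ≠ 0 := Polynomial.leadingCoeff_ne_zero.mpr hg
    have hB := ih g.leadingCoeff hgc
    -- the product-space set
    set W : Set (ℝ × (Fin n → ℝ)) :=
      {p | eval (fun j => ((Fin.cons p.1 p.2 : Fin (n + 1) → ℝ) j : ℂ)) Q = 0} with hW
    have hWcont : Continuous fun p : ℝ × (Fin n → ℝ) =>
        eval (fun j => ((Fin.cons p.1 p.2 : Fin (n + 1) → ℝ) j : ℂ)) Q := by
      refine (mv_continuous_eval Q).comp (continuous_pi fun j => ?_)
      refine Complex.continuous_ofReal.comp ?_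
      refine j.cases ?_ (fun j' => ?_)
      · simpa using continuous_fst
      · simp only [Fin.cons_succ]; exact (continuous_apply j').comp continuous_snd
    have hWm : MeasurableSet W := hWcont.measurable (measurableSet_singleton 0)
    have he := MeasureTheory.volume_preserving_piFinSuccAbove (fun _ : Fin (n + 1) => ℝ) 0
    have hZ : {x : Fin (n + 1) → ℝ | eval (fun i => (x i : ℂ)) Q = 0}
        = MeasurableEquiv.piFinSuccAbove (fun _ : Fin (n + 1) => ℝ) 0 ⁻¹' W := by
      ext x
      simp only [Set.mem_setOf_eq, Set.mem_preimage, MeasurableEquiv.piFinSuccAbove_apply, hW,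
        Fin.insertNthEquiv, Fin.removeNth_zero, Fin.cons_self_tail, Equiv.coe_fn_symm_mk]
    rw [hZ, he.measure_preimage hWm.nullMeasurableSet]
    -- swap coordinates
    have hsw := (MeasureTheory.Measure.measurePreserving_swap
      (μ := (volume : Measure ℝ)) (ν := (volume : Measure (Fin n → ℝ))))
    have hW' : MeasurableSet (Prod.swap ⁻¹' W : Set ((Fin n → ℝ) × ℝ)) :=
      hWm.preimage measurable_swap
    have : W = Prod.swap ⁻¹' (Prod.swap ⁻¹' W : Set ((Fin n → ℝ) × ℝ)) := by
      ext p; simp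
    rw [MeasureTheory.Measure.volume_eq_prod, this, hsw.measure_preimage hW'.nullMeasurableSet]
    rw [MeasureTheory.Measure.measure_prod_null hW']
    -- a.e. slices are null
    have hae : ∀ᵐ y ∂(volume : Measure (Fin n → ℝ)),
        eval (fun i => (y i : ℂ)) g.leadingCoeff ≠ 0 := by
      rw [MeasureTheory.ae_iff]
      simpa using hB
    filter_upwards [hae] with y hy
    show volume (Prod.mk y ⁻¹' (Prod.swap ⁻¹' W)) = 0
    have hset : (Prod.mk y ⁻¹' (Prod.swap ⁻¹' W) : Set ℝ) =
        {t : ℝ | eval (fun j => ((Fin.cons t y : Fin (n + 1) → ℝ) j : ℂ)) Q = 0} := rfl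
    rw [hset]
    set q : Polynomial ℂ := g.map (eval fun i => (y i : ℂ)) with hq
    have hkey : ∀ t : ℝ, eval (fun j => ((Fin.cons t y : Fin (n + 1) → ℝ) j : ℂ)) Q
        = q.eval (t : ℂ) := by
      intro t
      have h1 : (fun j => ((Fin.cons t y : Fin (n + 1) → ℝ) j : ℂ))
          = Fin.cons (t : ℂ) (fun i => (y i : ℂ)) := by
        funext j
        refine j.cases ?_ (fun j' => ?_) <;> simp
      rw [h1, eval_eq_eval_mv_eval']
    have hq0 : q ≠ 0 := by
      intro h
      apply hy
      have hco : q.coeff g.natDegree = eval (fun i => (y i : ℂ)) g.leadingCoeff := by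
        rw [hq, Polynomial.coeff_map]; rfl
      rw [h] at hco
      simpa using hco.symm
    have hfin : Set.Finite {t : ℝ |
        eval (fun j => ((Fin.cons t y : Fin (n + 1) → ℝ) j : ℂ)) Q = 0} := by
      have hsub : {t : ℝ | eval (fun j => ((Fin.cons t y : Fin (n + 1) → ℝ) j : ℂ)) Q = 0}
          ⊆ (fun t : ℝ => (t : ℂ)) ⁻¹' {c : ℂ | q.IsRoot c} := by
        intro t ht
        simp only [Set.mem_setOf_eq] at ht
        simp only [Set.mem_preimage, Set.mem_setOf_eq, Polynomial.IsRoot]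
        rw [← hkey t]; exact ht
      exact ((Polynomial.finite_setOf_isRoot hq0).preimage
        (Complex.ofReal_injective.injOn)).subset hsub
    exact hfin.measure_zero _

lemma vol_null_fintype {σ : Type*} [Fintype σ] (Q : MvPolynomial σ ℂ) (hQ : Q ≠ 0) :
    volume {y : σ → ℝ | eval (fun j => (y j : ℂ)) Q = 0} = 0 := by
  classical
  set e := Fintype.equivFin σ with he
  set φ := MeasurableEquiv.piCongrLeft (fun _ : σ => ℝ) e.symm with hφ
  have hmp := MeasureTheory.volume_measurePreserving_piCongrLeft (fun _ : σ => ℝ) e.symm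
  have happ : ∀ (x : Fin (Fintype.card σ) → ℝ) (j : σ), φ x j = x (e j) := by
    intro x j
    show (Equiv.piCongrLeft (fun _ : σ => ℝ) e.symm) x j = x (e j)
    conv_lhs => rw [show j = e.symm (e j) from (e.symm_apply_apply j).symm]
    exact Equiv.piCongrLeft_apply_apply (fun _ : σ => ℝ) e.symm x (e j)
  have hScont : Continuous fun y : σ → ℝ => eval (fun j => (y j : ℂ)) Q :=
    (mv_continuous_eval Q).comp (continuous_pi fun j =>
      Complex.continuous_ofReal.comp (continuous_apply j))
  have hSm : MeasurableSet {y : σ → ℝ | eval (fun j => (y j : ℂ)) Q = 0} :=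
    hScont.measurable (measurableSet_singleton 0)
  rw [← hmp.measure_preimage hSm.nullMeasurableSet]
  have hpre : φ ⁻¹' {y : σ → ℝ | eval (fun j => (y j : ℂ)) Q = 0}
      = {x : Fin (Fintype.card σ) → ℝ |
          eval (fun i => (x i : ℂ)) (rename e Q) = 0} := by
    ext x
    simp only [Set.mem_preimage, Set.mem_setOf_eq, eval_rename]
    have hfun : (fun j : σ => ((φ x j : ℝ) : ℂ)) = ((fun i => (x i : ℂ)) ∘ e) := by
      funext j; simp [happ x j]
    rw [hfun]
  rw [hpre]
  exact vol_null_fin _ _ (fun h => hQ (by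
    have := (MvPolynomial.rename_injective (R := ℂ) e e.injective)
    exact this (by simp [h])))

lemma eval_isHomogeneous_mul {σ : Type*} {p : MvPolynomial σ ℂ} {k : ℕ}
    (hp : p.IsHomogeneous k) (c : ℂ) (x : σ → ℂ) :
    eval (fun i => c * x i) p = c ^ k * eval x p := by
  rw [eval_eq, eval_eq, Finset.mul_sum]
  refine Finset.sum_congr rfl fun d hd => ?_
  have hdeg : ∑ i ∈ d.support, d i = k := by
    have := hp (mem_support_iff.mp hd)
    rwa [Pi.one_def, ← Finsupp.degree_eq_weight_one, Finsupp.degree_apply] at this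
  calc p.coeff d * ∏ i ∈ d.support, (c * x i) ^ d i
      = p.coeff d * ((∏ i ∈ d.support, c ^ d i) * ∏ i ∈ d.support, x i ^ d i) := by
        rw [← Finset.prod_mul_distrib]; simp_rw [mul_pow]
    _ = c ^ k * (p.coeff d * ∏ i ∈ d.support, x i ^ d i) := by
        rw [Finset.prod_pow_eq_pow_sum, hdeg]; ring

noncomputable def theta (m : ℕ) : MvPolynomial (Fin m) ℂ →ₐ[ℂ] MvPolynomial (Fin m ⊕ Fin m) ℂ :=
  aeval (fun i => X (Sum.inl i) + X (Sum.inr i) * C Complex.I)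

def vv (m : ℕ) (x : Fin m → ℂ) : Fin m ⊕ Fin m → ℂ :=
  Sum.elim (fun i => ((x i).re : ℂ)) fun i => ((x i).im : ℂ)

lemma eval_theta {m : ℕ} (x : Fin m → ℂ) (p : MvPolynomial (Fin m) ℂ) :
    eval (vv m x) (theta m p) = eval x p := by
  induction p using MvPolynomial.induction_on with
  | C a => simp [theta]
  | add p q hp hq => simp [map_add, hp, hq]
  | mul_X p i hp =>
      rw [map_mul, map_mul, hp]
      congr 1
      simp [theta, vv, Complex.re_add_im]

noncomputable def nrm (m : ℕ) : MvPolynomial (Fin m ⊕ Fin m) ℂ :=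
  ∑ i : Fin m, (X (Sum.inl i) ^ 2 + X (Sum.inr i) ^ 2)

lemma eval_nrm {m : ℕ} (x : EuclideanSpace ℂ (Fin m)) :
    eval (vv m (fun i => x i)) (nrm m) = ((‖x‖ ^ 2 : ℝ) : ℂ) := by
  have hn : (‖x‖ ^ 2 : ℝ) = ∑ i, ((x i).re ^ 2 + (x i).im ^ 2) := by
    rw [EuclideanSpace.norm_eq, Real.sq_sqrt (by positivity)]
    refine Finset.sum_congr rfl fun i _ => ?_
    rw [Complex.sq_norm, Complex.normSq_apply]; ring
  rw [hn, nrm]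
  push_cast
  rw [map_sum]
  refine Finset.sum_congr rfl fun i _ => ?_
  simp [vv]

noncomputable def polyA (m : ℕ) (f : MvPolynomial (Fin m) ℂ) :
    MvPolynomial (Fin m ⊕ Fin m) ℂ :=
  ∑ k ∈ (Finset.range (f.totalDegree + 1)).filter (fun k => Even (f.totalDegree - k)),
    theta m (homogeneousComponent k f) * nrm m ^ ((f.totalDegree - k) / 2)

noncomputable def polyB (m : ℕ) (f : MvPolynomial (Fin m) ℂ) :
    MvPolynomial (Fin m ⊕ Fin m) ℂ :=
  ∑ k ∈ (Finset.range (f.totalDegree + 1)).filter (fun k => ¬ Even (f.totalDegree - k)),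
    theta m (homogeneousComponent k f) * nrm m ^ ((f.totalDegree - k - 1) / 2)

noncomputable def polyQ (m : ℕ) (f : MvPolynomial (Fin m) ℂ) :
    MvPolynomial (Fin m ⊕ Fin m) ℂ :=
  polyA m f ^ 2 - nrm m * polyB m f ^ 2

lemma eval_polyQ_smul (m : ℕ) (f : MvPolynomial (Fin m) ℂ) (r : ℝ) (hr : 0 ≤ r)
    (z : EuclideanSpace ℂ (Fin m)) (hz : ‖z‖ = 1) :
    eval (vv m (fun i => (r • z : EuclideanSpace ℂ (Fin m)) i)) (polyQ m f) =
      (r : ℂ) ^ (2 * f.totalDegree) *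
        (((∑ k ∈ (Finset.range (f.totalDegree + 1)).filter (fun k => Even (f.totalDegree - k)),
            eval (fun i => z i) (homogeneousComponent k f)) +
          (∑ k ∈ (Finset.range (f.totalDegree + 1)).filter (fun k => ¬ Even (f.totalDegree - k)),
            eval (fun i => z i) (homogeneousComponent k f))) *
         ((∑ k ∈ (Finset.range (f.totalDegree + 1)).filter (fun k => Even (f.totalDegree - k)),
            eval (fun i => z i) (homogeneousComponent k f)) -
          (∑ k ∈ (Finset.range (f.totalDegree + 1)).filter (fun k => ¬ Even (f.totalDegree - k)),
            eval (fun i => z i) (homogeneousComponent k f)))) := by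
  set d := f.totalDegree with hd
  set x : EuclideanSpace ℂ (Fin m) := r • z with hx
  have hxnorm : ‖x‖ = r := by
    rw [hx, norm_smul, hz, Real.norm_eq_abs, abs_of_nonneg hr, mul_one]
  have hxc : (fun i => x i) = fun i => (r : ℂ) * z i := by
    funext i
    show (r • z) i = (r : ℂ) * z i
    rw [PiLp.smul_apply]
    exact Complex.real_smul
  have hnrmx : eval (vv m (fun i => x i)) (nrm m) = (r : ℂ) ^ 2 := by
    rw [eval_nrm x, hxnorm]; push_cast; ring
  set α := ∑ k ∈ (Finset.range (d + 1)).filter (fun k => Even (d - k)),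
      eval (fun i => z i) (homogeneousComponent k f) with hα
  set β := ∑ k ∈ (Finset.range (d + 1)).filter (fun k => ¬ Even (d - k)),
      eval (fun i => z i) (homogeneousComponent k f) with hβ
  have hterm : ∀ k, k ∈ Finset.range (d + 1) →
      eval (vv m (fun i => x i)) (theta m (homogeneousComponent k f))
        = (r : ℂ) ^ k * eval (fun i => z i) (homogeneousComponent k f) := by
    intro k _
    rw [eval_theta, hxc]
    exact eval_isHomogeneous_mul (homogeneousComponent_isHomogeneous k f) _ _
  have hA : eval (vv m (fun i => x i)) (polyA m f) = (r : ℂ) ^ d * α := by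
    rw [polyA, map_sum, hα, Finset.mul_sum]
    refine Finset.sum_congr rfl fun k hk => ?_
    have hk' := Finset.mem_filter.mp hk
    have hkle : k ≤ d := Nat.lt_succ_iff.mp (Finset.mem_range.mp hk'.1)
    rw [map_mul, map_pow, hterm k hk'.1, hnrmx, ← pow_mul]
    rw [show 2 * ((d - k) / 2) = d - k from by
      have h2 := Nat.div_two_mul_two_of_even hk'.2; omega]
    have hpow : (r:ℂ)^k * (r:ℂ)^(d-k) = (r:ℂ)^d := by
      rw [← pow_add]; congr 1; omega
    calc (r:ℂ)^k * eval (fun i => z i) (homogeneousComponent k f) * (r:ℂ)^(d-k)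
        = ((r:ℂ)^k * (r:ℂ)^(d-k)) * eval (fun i => z i) (homogeneousComponent k f) := by ring
      _ = (r:ℂ)^d * eval (fun i => z i) (homogeneousComponent k f) := by rw [hpow]
  have hB : eval (vv m (fun i => x i)) (polyB m f) = (r : ℂ) ^ (d - 1) * β := by
    rw [polyB, map_sum, hβ, Finset.mul_sum]
    refine Finset.sum_congr rfl fun k hk => ?_
    have hk' := Finset.mem_filter.mp hk
    have hkle : k ≤ d := Nat.lt_succ_iff.mp (Finset.mem_range.mp hk'.1)
    have hodd : ¬ Even (d - k) := hk'.2
    have hpos : 1 ≤ d - k := Nat.one_le_iff_ne_zero.mpr (fun h => hodd (h ▸ Even.zero))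
    rw [map_mul, map_pow, hterm k hk'.1, hnrmx, ← pow_mul]
    rw [show 2 * ((d - k - 1) / 2) = d - k - 1 from by
      have hev : Even (d - k - 1) := by
        rcases Nat.even_or_odd (d - k) with h | h
        · exact absurd h hodd
        · rcases h with ⟨j, hj⟩
          exact ⟨j, by omega⟩
      have h2 := Nat.div_two_mul_two_of_even hev; omega]
    have hpow : (r:ℂ)^k * (r:ℂ)^(d-k-1) = (r:ℂ)^(d-1) := by
      rw [← pow_add]; congr 1; omega
    calc (r:ℂ)^k * eval (fun i => z i) (homogeneousComponent k f) * (r:ℂ)^(d-k-1)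
        = ((r:ℂ)^k * (r:ℂ)^(d-k-1)) * eval (fun i => z i) (homogeneousComponent k f) := by ring
      _ = (r:ℂ)^(d-1) * eval (fun i => z i) (homogeneousComponent k f) := by rw [hpow]
  have hQ : eval (vv m (fun i => x i)) (polyQ m f)
      = ((r:ℂ)^d * α)^2 - (r:ℂ)^2 * ((r:ℂ)^(d-1) * β)^2 := by
    rw [polyQ, map_sub, map_mul, map_pow, map_pow, hA, hB, hnrmx]
  rw [hQ]
  rcases Nat.eq_zero_or_pos d with hd0 | hdpos
  · have hβ0 : β = 0 := by
      rw [hβ]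
      refine Finset.sum_eq_zero fun k hk => ?_
      have hk' := Finset.mem_filter.mp hk
      exfalso
      apply hk'.2
      have : k = 0 := by have := Finset.mem_range.mp hk'.1; omega
      simp [this, hd0]
    rw [hβ0, hd0]
    ring
  · have h2 : (r:ℂ)^2 * ((r:ℂ)^(d-1))^2 = (r:ℂ)^(2*d) := by
      rw [← pow_mul, ← pow_add]
      congr 1
      omega
    calc ((r:ℂ)^d * α)^2 - (r:ℂ)^2 * ((r:ℂ)^(d-1) * β)^2
        = (r:ℂ)^(2*d) * α^2 - ((r:ℂ)^2 * ((r:ℂ)^(d-1))^2) * β^2 := by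
          rw [← pow_mul]; ring
      _ = (r:ℂ)^(2*d) * ((α + β) * (α - β)) := by rw [h2]; ring

/-- sum over even+odd filters equals eval of f -/
lemma sum_even_add_odd {m : ℕ} (f : MvPolynomial (Fin m) ℂ) (z : Fin m → ℂ) :
    (∑ k ∈ (Finset.range (f.totalDegree + 1)).filter (fun k => Even (f.totalDegree - k)),
        eval z (homogeneousComponent k f)) +
    (∑ k ∈ (Finset.range (f.totalDegree + 1)).filter (fun k => ¬ Even (f.totalDegree - k)),
        eval z (homogeneousComponent k f)) = eval z f := by
  rw [Finset.sum_filter_add_sum_filter_not]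
  rw [← map_sum, MvPolynomial.sum_homogeneousComponent]

lemma sum_even_sub_odd {m : ℕ} (f : MvPolynomial (Fin m) ℂ) (z : Fin m → ℂ) :
    (∑ k ∈ (Finset.range (f.totalDegree + 1)).filter (fun k => Even (f.totalDegree - k)),
        eval z (homogeneousComponent k f)) -
    (∑ k ∈ (Finset.range (f.totalDegree + 1)).filter (fun k => ¬ Even (f.totalDegree - k)),
        eval z (homogeneousComponent k f))
    = (-1 : ℂ) ^ f.totalDegree * eval (fun i => - z i) f := by
  set d := f.totalDegree with hd
  have hrhs : eval (fun i => - z i) f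
      = ∑ k ∈ Finset.range (d + 1), (-1:ℂ)^k * eval z (homogeneousComponent k f) := by
    conv_lhs => rw [← MvPolynomial.sum_homogeneousComponent f]
    rw [map_sum]
    refine Finset.sum_congr rfl fun k _ => ?_
    have : (fun i => - z i) = fun i => (-1 : ℂ) * z i := by funext i; ring
    rw [this]
    exact eval_isHomogeneous_mul (homogeneousComponent_isHomogeneous k f) _ _
  rw [hrhs, Finset.mul_sum]
  rw [Finset.sum_filter, Finset.sum_filter, ← Finset.sum_sub_distrib]
  refine Finset.sum_congr rfl fun k hk => ?_
  have hkle : k ≤ d := Nat.lt_succ_iff.mp (Finset.mem_range.mp hk)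
  have hsign : (-1:ℂ)^d * ((-1:ℂ)^k * eval z (homogeneousComponent k f))
      = (-1:ℂ)^(d+k) * eval z (homogeneousComponent k f) := by
    rw [← mul_assoc, ← pow_add]
  rw [hsign]
  by_cases hpar : Even (d - k)
  · have : Even (d + k) := by
      rw [Nat.even_add]
      exact (Nat.even_sub hkle).mp hpar
    rw [if_pos hpar, if_neg (by simp [hpar] : ¬ ¬ Even (d - k)), this.neg_one_pow]
    ring
  · have : ¬ Even (d + k) := by
      rw [Nat.even_add]
      intro h
      exact hpar ((Nat.even_sub hkle).mpr h)
    rw [if_neg hpar, if_pos hpar, (Nat.not_even_iff_odd.mp this).neg_one_pow]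
    ring

lemma eval_aeval_neg {m : ℕ} (w : Fin m → ℂ) (p : MvPolynomial (Fin m) ℂ) :
    eval w (aeval (fun i => - X i : Fin m → MvPolynomial (Fin m) ℂ) p)
      = eval (fun i => - w i) p := by
  induction p using MvPolynomial.induction_on with
  | C a => simp
  | add p q hp hq => rw [map_add, map_add, hp, hq, map_add]
  | mul_X p i hp =>
      rw [map_mul, map_mul, hp]
      congr 1
      simp

lemma eval_line {m : ℕ} (g : Fin m → ℂ) (p : MvPolynomial (Fin m) ℂ) (t : ℂ) :
    Polynomial.eval t
        (aeval (fun i => Polynomial.C (g i) * Polynomial.X) p : Polynomial ℂ)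
      = eval (fun i => g i * t) p := by
  induction p using MvPolynomial.induction_on with
  | C a => simp
  | add p q hp hq =>
      rw [map_add, Polynomial.eval_add, hp, hq, map_add]
  | mul_X p i hp =>
      rw [map_mul, Polynomial.eval_mul, hp, map_mul]
      congr 1
      simp

lemma circle_infinite : Set.Infinite {t : ℂ | ‖t‖ = 1} := by
  have hmaps : Set.MapsTo (fun a : ℝ => (⟨a, Real.sqrt (1 - a^2)⟩ : ℂ))
      (Set.Ioo (-1 : ℝ) 1) {t : ℂ | ‖t‖ = 1} := by
    intro a ha
    simp only [Set.mem_setOf_eq]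
    rw [Complex.norm_def, Complex.normSq_mk]
    rw [show Real.sqrt (1 - a^2) * Real.sqrt (1 - a^2) = 1 - a^2 from
      Real.mul_self_sqrt (by nlinarith [ha.1, ha.2])]
    rw [show a * a + (1 - a^2) = 1 by ring, Real.sqrt_one]
  have hinj : Set.InjOn (fun a : ℝ => (⟨a, Real.sqrt (1 - a^2)⟩ : ℂ))
      (Set.Ioo (-1 : ℝ) 1) := by
    intro a _ b _ hab
    exact congrArg Complex.re hab
  exact ((Set.Ioo_infinite (by norm_num)).image hinj).mono (Set.mapsTo_iff_image_subset.mp hmaps)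

lemma exists_unit_eval_ne_zero {m : ℕ} (hm : 1 ≤ m) (G : MvPolynomial (Fin m) ℂ)
    (hG : G ≠ 0) :
    ∃ z : EuclideanSpace ℂ (Fin m), ‖z‖ = 1 ∧ eval (fun i => z i) G ≠ 0 := by
  by_contra hcon
  push_neg at hcon
  have step1 : ∀ x : EuclideanSpace ℂ (Fin m), x ≠ 0 → eval (fun i => x i) G = 0 := by
    intro x hx
    set z : EuclideanSpace ℂ (Fin m) := ((‖x‖⁻¹ : ℂ)) • x with hzdef
    have hz : ‖z‖ = 1 := norm_smul_inv_norm hx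
    set q : Polynomial ℂ := aeval (fun i => Polynomial.C (z i) * Polynomial.X) G with hqdef
    have hq0 : q = 0 := by
      refine Polynomial.eq_zero_of_infinite_isRoot q (circle_infinite.mono ?_)
      intro t ht
      simp only [Set.mem_setOf_eq] at ht ⊢
      show q.eval t = 0
      rw [hqdef, eval_line]
      have h1 : (fun i => z i * t) = fun i => (t • z : EuclideanSpace ℂ (Fin m)) i := by
        funext i
        exact mul_comm _ _
      rw [h1]
      exact hcon (t • z) (by rw [norm_smul, hz, ht, mul_one])
    have hxz : (fun i => x i) = fun i => z i * ((‖x‖ : ℂ)) := by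
      funext i
      rw [hzdef, PiLp.smul_apply, smul_eq_mul]
      have hnx : (‖x‖ : ℂ) ≠ 0 := by
        simpa using (norm_ne_zero_iff.mpr hx)
      field_simp
    rw [hxz, ← eval_line z, ← hqdef, hq0]
    simp
  have step2 : eval (fun _ : Fin m => (0 : ℂ)) G = 0 := by
    set e0 : EuclideanSpace ℂ (Fin m) := EuclideanSpace.single (⟨0, hm⟩ : Fin m) (1 : ℂ)
      with he0def
    set q0 : Polynomial ℂ := aeval (fun i => Polynomial.C (e0 i) * Polynomial.X) G with hq0def
    have hq00 : q0 = 0 := by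
      refine Polynomial.eq_zero_of_infinite_isRoot q0
        (((Set.finite_singleton (0:ℂ)).infinite_compl).mono ?_)
      intro t ht
      simp only [Set.mem_compl_iff, Set.mem_singleton_iff] at ht
      show q0.eval t = 0
      rw [hq0def, eval_line]
      have h1 : (fun i => e0 i * t) = fun i => (t • e0 : EuclideanSpace ℂ (Fin m)) i := by
        funext i
        rw [PiLp.smul_apply, smul_eq_mul, mul_comm]
      rw [h1]
      refine step1 (t • e0) ?_
      rw [← norm_ne_zero_iff, norm_smul, EuclideanSpace.norm_single]
      simpa using ht
    have := congrArg (Polynomial.eval (0:ℂ)) hq00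
    rw [hq0def, eval_line] at this
    simpa using this
  apply hG
  apply MvPolynomial.funext
  intro w
  rw [map_zero]
  by_cases hw : ∀ i, w i = 0
  · have : w = fun _ : Fin m => (0:ℂ) := funext hw
    rw [this]; exact step2
  · push_neg at hw
    obtain ⟨i0, hi0⟩ := hw
    have hx : (WithLp.toLp 2 w : EuclideanSpace ℂ (Fin m)) ≠ 0 := by
      intro h
      exact hi0 (congrFun (congrArg WithLp.ofLp h) i0)
    exact step1 _ hx

lemma polyQ_ne_zero {m : ℕ} (hm : 1 ≤ m) (f : MvPolynomial (Fin m) ℂ) (hf : f ≠ 0) :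
    polyQ m f ≠ 0 := by
  intro hQ0
  set fneg := aeval (fun i => - X i : Fin m → MvPolynomial (Fin m) ℂ) f with hfnegdef
  have hfneg : fneg ≠ 0 := by
    intro h
    apply hf
    apply MvPolynomial.funext
    intro w
    rw [map_zero]
    have h1 : eval (fun i => - (- w i)) f = 0 := by
      have := congrArg (eval (fun i => - w i)) h
      rw [hfnegdef, eval_aeval_neg] at this
      simpa using this
    simpa using h1
  have hG : f * fneg ≠ 0 := mul_ne_zero hf hfneg
  obtain ⟨z, hz1, hzG⟩ := exists_unit_eval_ne_zero hm (f * fneg) hG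
  have heval := eval_polyQ_smul m f 1 zero_le_one z hz1
  rw [one_smul, hQ0] at heval
  rw [sum_even_add_odd, sum_even_sub_odd] at heval
  simp only [map_zero, Complex.ofReal_one, one_pow, one_mul] at heval
  apply hzG
  rw [map_mul, hfnegdef, eval_aeval_neg]
  rcases mul_eq_zero.mp heval.symm with h | h
  · rw [h, zero_mul]
  · rcases mul_eq_zero.mp h with h' | h'
    · exfalso
      have : ((-1 : ℂ)) ^ f.totalDegree ≠ 0 := pow_ne_zero _ (by norm_num)
      exact this h'
    · rw [h', mul_zero]

noncomputable def Mlin (m : ℕ) : (Fin m ⊕ Fin m → ℝ) ≃ₗ[ℝ] EuclideanSpace ℂ (Fin m) where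
  toFun y := WithLp.toLp 2 (fun i => (y (Sum.inl i) : ℂ) + (y (Sum.inr i) : ℂ) * Complex.I)
  map_add' a b := by
    ext i
    simp only [PiLp.add_apply, Pi.add_apply]
    push_cast
    ring
  map_smul' c a := by
    ext i
    simp only [PiLp.smul_apply, Pi.smul_apply, RingHom.id_apply, smul_eq_mul,
      Complex.real_smul]
    push_cast
    ring
  invFun x := fun j => Sum.elim (fun i => (x i).re) (fun i => (x i).im) j
  left_inv y := by
    funext j
    rcases j with i | i <;> simp
  right_inv x := by
    ext i
    simp [Complex.re_add_im]

lemma continuous_evalvv {m : ℕ} (Q : MvPolynomial (Fin m ⊕ Fin m) ℂ) :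
    Continuous fun x : EuclideanSpace ℂ (Fin m) => eval (vv m (fun i => x i)) Q := by
  refine (mv_continuous_eval Q).comp (continuous_pi fun j => ?_)
  rcases j with i | i
  · exact Complex.continuous_ofReal.comp
      (Complex.continuous_re.comp (EuclideanSpace.proj i).continuous)
  · exact Complex.continuous_ofReal.comp
      (Complex.continuous_im.comp (EuclideanSpace.proj i).continuous)

lemma volume_null_evalvv {m : ℕ} (Q : MvPolynomial (Fin m ⊕ Fin m) ℂ) (hQ : Q ≠ 0) :
    volume {x : EuclideanSpace ℂ (Fin m) | eval (vv m (fun i => x i)) Q = 0} = 0 := by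
  set Z := {x : EuclideanSpace ℂ (Fin m) | eval (vv m (fun i => x i)) Q = 0} with hZ
  have hZm : MeasurableSet Z :=
    (continuous_evalvv Q).measurable (measurableSet_singleton 0)
  set M := Mlin m with hM
  have hMmeas : Measurable (⇑M) := by
    have : Continuous (⇑M) := M.toContinuousLinearEquiv.continuous
    exact this.measurable
  have hmap : (volume.map ⇑M) Z = volume (⇑M ⁻¹' Z) :=
    Measure.map_apply hMmeas hZm
  have hpre : (⇑M ⁻¹' Z) = {y : Fin m ⊕ Fin m → ℝ | eval (fun j => (y j : ℂ)) Q = 0} := by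
    ext y
    simp only [Set.mem_preimage, hZ, Set.mem_setOf_eq]
    have : vv m (fun i => M y i) = fun j => (y j : ℂ) := by
      funext j
      rcases j with i | i
      · simp only [vv, Sum.elim_inl, Complex.ofReal_inj]
        show ((Mlin m) y i).re = y (Sum.inl i)
        simp [Mlin]
      · simp only [vv, Sum.elim_inr, Complex.ofReal_inj]
        show ((Mlin m) y i).im = y (Sum.inr i)
        simp [Mlin]
    rw [this]
  have hnull : (volume.map ⇑M) Z = 0 := by
    rw [hmap, hpre]
    exact vol_null_fintype Q hQ
  haveI : Measure.IsAddHaarMeasure (volume.map ⇑M) :=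
    Measure.MapLinearEquiv.isAddHaarMeasure _ M
  have habs : (volume : Measure (EuclideanSpace ℂ (Fin m))) ≪ (volume.map ⇑M) :=
    Measure.absolutelyContinuous_isAddHaarMeasure _ _
  exact habs hnull

/-- **The zero set of a nonzero polynomial is null on the sphere.**
Let `m ≥ 1` and let `f` be a nonzero polynomial in `m` complex variables.  Then the set
of points of the unit sphere `S ⊆ ℂ^m` at which `f` vanishes has measure zero for the
surface measure on `S`. -/
theorem measure_zero_set_of_polynomial_on_sphere
    (m : ℕ) (hm : 1 ≤ m) (f : MvPolynomial (Fin m) ℂ) (hf : f ≠ 0) :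
    sphereSurfaceMeasure m
      {z : sphere (0 : EuclideanSpace ℂ (Fin m)) 1 |
        MvPolynomial.eval (fun i => (z : EuclideanSpace ℂ (Fin m)) i) f = 0} = 0 := by
  classical
  set s : Set (sphere (0 : EuclideanSpace ℂ (Fin m)) 1) :=
    {z : sphere (0 : EuclideanSpace ℂ (Fin m)) 1 |
      MvPolynomial.eval (fun i => (z : EuclideanSpace ℂ (Fin m)) i) f = 0} with hsdef
  have hs : MeasurableSet s := by
    have hcont : Continuous fun z : sphere (0 : EuclideanSpace ℂ (Fin m)) 1 =>
        MvPolynomial.eval (fun i => (z : EuclideanSpace ℂ (Fin m)) i) f := by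
      refine (mv_continuous_eval f).comp (continuous_pi fun i => ?_)
      exact (EuclideanSpace.proj i).continuous.comp continuous_subtype_val
    exact hcont.measurable (measurableSet_singleton 0)
  rw [sphereSurfaceMeasure, Measure.toSphere_apply' _ hs]
  have hcone : volume ((Set.Ioo (0:ℝ) 1) • (Subtype.val '' s : Set (EuclideanSpace ℂ (Fin m)))) = 0 := by
    refine measure_mono_null ?_ (volume_null_evalvv (polyQ m f) (polyQ_ne_zero hm f hf))
    rintro x hx
    rw [Set.mem_smul] at hx
    obtain ⟨r, hr, y, hy, rfl⟩ := hx
    obtain ⟨z, hzs, rfl⟩ := hy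
    have hz1 : ‖(z : EuclideanSpace ℂ (Fin m))‖ = 1 :=
      mem_sphere_zero_iff_norm.mp z.2
    have hz0 : MvPolynomial.eval (fun i => (z : EuclideanSpace ℂ (Fin m)) i) f = 0 := hzs
    show MvPolynomial.eval
      (vv m (fun i => (r • (z : EuclideanSpace ℂ (Fin m)) : EuclideanSpace ℂ (Fin m)) i))
      (polyQ m f) = 0
    rw [eval_polyQ_smul m f r hr.1.le _ hz1, sum_even_add_odd, sum_even_sub_odd, hz0]
    simp
  rw [hcone, mul_zero]
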